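/- arXiv:2101.00144 — 3 statements merged into one kernel-verified Lean document; each statement's English description precedes it below -/
import Mathlib

section
/- Let x, y, z ≥ 0 and set x* = y + z - x, and assume 0 ≤ x ≤ y + z (so x* ≥ 0). Then min(√x + √y, √x* + √z) - max(|√x - √y|, |√x* - √z|) = 2·min(√x, √x*, √y, √z). -/
lemma aux0 (a b c d : ℝ) (ha : 0 ≤ a) (hb : 0 ≤ b) (hc : 0 ≤ c) (hd : 0 ≤ d)
    (key : a^2 + c^2 = b^2 + d^2) :
    min (a + b) (c + d) - max |a - b| |c - d| = 2 * min (min a c) (min b d) := by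
  rcases le_total a b with hab | hab
  · -- a ≤ b, hence d ≤ c
    have hdc : d ≤ c := by nlinarith
    rcases le_total a d with had | had
    · -- a is the min
      have hbc : b ≤ c := by nlinarith
      have h1 : a + b ≤ c + d := by nlinarith
      have h2 : c - d ≤ b - a := by nlinarith
      rw [min_eq_left h1, abs_of_nonpos (by linarith), abs_of_nonneg (by linarith),
        max_eq_left (by linarith), min_eq_left (le_trans had hdc),
        min_eq_left (le_min hab had)]
      ring
    · -- d is the min
      have hcb : c ≤ b := by nlinarith
      have h1 : c + d ≤ a + b := by nlinarith
      have h2 : b - a ≤ c - d := by nlinarith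
      rw [min_eq_right h1, abs_of_nonpos (by linarith), abs_of_nonneg (by linarith),
        max_eq_right (by linarith), min_eq_right (by linarith : d ≤ b),
        min_eq_right (le_min had hdc)]
      ring
  · -- b ≤ a, hence c ≤ d
    have hcd : c ≤ d := by nlinarith
    rcases le_total b c with hbc | hbc
    · -- b is the min
      have had : a ≤ d := by nlinarith
      have h1 : a + b ≤ c + d := by nlinarith
      have h2 : d - c ≤ a - b := by nlinarith
      rw [min_eq_left h1, abs_of_nonneg (by linarith), abs_of_nonpos (by linarith),
        max_eq_left (by linarith), min_eq_left (le_trans hbc hcd),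
        min_eq_right (le_min hab hbc)]
      ring
    · -- c is the min
      have hda : d ≤ a := by nlinarith
      have h1 : c + d ≤ a + b := by nlinarith
      have h2 : a - b ≤ d - c := by nlinarith
      rw [min_eq_right h1, abs_of_nonneg (by linarith), abs_of_nonpos (by linarith),
        max_eq_right (by linarith), min_eq_right (le_trans hbc hab),
        min_eq_left (le_min hbc hcd)]
      ring

theorem stmt_0 (x y z : ℝ) (hx : 0 ≤ x) (hy : 0 ≤ y) (hz : 0 ≤ z) (hxyz : x ≤ y + z) :
    min (Real.sqrt x + Real.sqrt y) (Real.sqrt (y + z - x) + Real.sqrt z)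
      - max |Real.sqrt x - Real.sqrt y| |Real.sqrt (y + z - x) - Real.sqrt z|
    = 2 * min (min (Real.sqrt x) (Real.sqrt (y + z - x))) (min (Real.sqrt y) (Real.sqrt z)) := by
  apply aux0 _ _ _ _ (Real.sqrt_nonneg _) (Real.sqrt_nonneg _) (Real.sqrt_nonneg _)
    (Real.sqrt_nonneg _)
  rw [Real.sq_sqrt hx, Real.sq_sqrt hy, Real.sq_sqrt hz, Real.sq_sqrt (by linarith)]
  ring
end

section
/- Let 0 < p ≤ 1/2 and let 0 < y ≤ z. Define W_H(x,y,z) = min(√x, √y, √z, √(y+z-x))/√(xyz) for 0 < x < y + z. Then ∫₀^{y+z} W_H(x, y, z) · x^{-p} · √x dx ≤ 4·z^{1/2 - p}. -/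
theorem stmt_9 (p y z : ℝ) (hp : 0 < p) (hp2 : p ≤ 1/2) (hy : 0 < y) (hyz : y ≤ z) :
    ∫ x in (0:ℝ)..(y + z),
        (min (min (Real.sqrt x) (Real.sqrt y)) (min (Real.sqrt z) (Real.sqrt (y + z - x))) /
          Real.sqrt (x * y * z)) * x ^ (-p) * Real.sqrt x
      ≤ 4 * z ^ ((1:ℝ)/2 - p) := by
  have hz : (0:ℝ) < z := lt_of_lt_of_le hy hyz
  have hb : (0:ℝ) < y + z := by linarith
  have hp1 : -p + 1 ≠ 0 := by linarith
  have key : ∫ x in (0:ℝ)..(y + z),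
        (min (min (Real.sqrt x) (Real.sqrt y)) (min (Real.sqrt z) (Real.sqrt (y + z - x))) /
          Real.sqrt (x * y * z)) * x ^ (-p) * Real.sqrt x
      ≤ ∫ x in (0:ℝ)..(y + z), x ^ (-p) / Real.sqrt z := by
    rw [intervalIntegral.integral_of_le hb.le, intervalIntegral.integral_of_le hb.le]
    apply MeasureTheory.integral_mono_of_nonneg
    · filter_upwards [MeasureTheory.ae_restrict_mem measurableSet_Ioc] with x hx
      have hx0 : 0 < x := hx.1
      have hmin : 0 ≤ min (min (Real.sqrt x) (Real.sqrt y)) (min (Real.sqrt z) (Real.sqrt (y + z - x))) :=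
        le_min (le_min (Real.sqrt_nonneg _) (Real.sqrt_nonneg _))
          (le_min (Real.sqrt_nonneg _) (Real.sqrt_nonneg _))
      have := Real.rpow_nonneg hx0.le (-p)
      positivity
    · exact ((intervalIntegral.intervalIntegrable_rpow' (by linarith : (-1:ℝ) < -p)).div_const
        (Real.sqrt z)).1
    · filter_upwards [MeasureTheory.ae_restrict_mem measurableSet_Ioc] with x hx
      have hx0 : 0 < x := hx.1
      have hsx : 0 < Real.sqrt x := Real.sqrt_pos.mpr hx0
      have hsy : 0 < Real.sqrt y := Real.sqrt_pos.mpr hy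
      have hsz : 0 < Real.sqrt z := Real.sqrt_pos.mpr hz
      have hmin : min (min (Real.sqrt x) (Real.sqrt y)) (min (Real.sqrt z) (Real.sqrt (y + z - x)))
          ≤ Real.sqrt y := le_trans (min_le_left _ _) (min_le_right _ _)
      have hsplit : Real.sqrt (x * y * z) = Real.sqrt x * Real.sqrt y * Real.sqrt z := by
        rw [Real.sqrt_mul (by positivity), Real.sqrt_mul hx0.le]
      have hrp : (0:ℝ) ≤ x ^ (-p) := Real.rpow_nonneg hx0.le _
      have h1 : min (min (Real.sqrt x) (Real.sqrt y)) (min (Real.sqrt z) (Real.sqrt (y + z - x))) /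
          Real.sqrt (x * y * z) ≤ 1 / (Real.sqrt x * Real.sqrt z) := by
        rw [hsplit]
        rw [div_le_div_iff₀ (by positivity) (by positivity)]
        calc min (min (Real.sqrt x) (Real.sqrt y)) (min (Real.sqrt z) (Real.sqrt (y + z - x))) *
              (Real.sqrt x * Real.sqrt z) ≤ Real.sqrt y * (Real.sqrt x * Real.sqrt z) := by
              gcongr
          _ = 1 * (Real.sqrt x * Real.sqrt y * Real.sqrt z) := by ring
      calc (min (min (Real.sqrt x) (Real.sqrt y)) (min (Real.sqrt z) (Real.sqrt (y + z - x))) /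
              Real.sqrt (x * y * z)) * x ^ (-p) * Real.sqrt x
          ≤ (1 / (Real.sqrt x * Real.sqrt z)) * x ^ (-p) * Real.sqrt x := by
            gcongr
        _ = x ^ (-p) / Real.sqrt z := by
            field_simp
  refine key.trans ?_
  rw [intervalIntegral.integral_div, integral_rpow (Or.inl (by linarith : (-1:ℝ) < -p)),
    Real.zero_rpow hp1]
  have hsz : Real.sqrt z = z ^ ((1:ℝ)/2) := by
    rw [Real.sqrt_eq_rpow]
  have hA : (y + z) ^ (-p + 1) ≤ 2 * z ^ (-p + 1) := by
    calc (y + z) ^ (-p + 1) ≤ (2 * z) ^ (-p + 1) := by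
          apply Real.rpow_le_rpow hb.le (by linarith) (by linarith)
      _ = 2 ^ (-p + 1) * z ^ (-p + 1) := Real.mul_rpow (by norm_num) hz.le
      _ ≤ 2 * z ^ (-p + 1) := by
          have h2 : (2:ℝ) ^ (-p + 1) ≤ 2 := by
            calc (2:ℝ) ^ (-p + 1) ≤ 2 ^ (1:ℝ) :=
                Real.rpow_le_rpow_of_exponent_le (by norm_num) (by linarith)
              _ = 2 := Real.rpow_one 2
          have h3 : (0:ℝ) ≤ z ^ (-p + 1) := Real.rpow_nonneg hz.le _
          nlinarith
  have hfin : ((y + z) ^ (-p + 1) - 0) / (-p + 1) / Real.sqrt z ≤ 4 * z ^ ((1:ℝ)/2 - p) := by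
    rw [sub_zero]
    calc (y + z) ^ (-p + 1) / (-p + 1) / Real.sqrt z
        ≤ (2 * z ^ (-p + 1)) / (1/2) / Real.sqrt z := by
          have hszp : 0 < Real.sqrt z := Real.sqrt_pos.mpr hz
          gcongr <;> first | linarith | norm_num | positivity
      _ = 4 * (z ^ (-p + 1) / z ^ ((1:ℝ)/2)) := by rw [hsz]; ring
      _ = 4 * z ^ ((1:ℝ)/2 - p) := by
          rw [← Real.rpow_sub hz]
          norm_num
          ring_nf
  exact hfin
end

section
/- Let v, v* ∈ ℝ³, ω ∈ S², v' = v - ((v-v*)·ω)ω, v*' = v* + ((v-v*)·ω)ω, and ⟨u⟩ = (1 + |u|²)^{1/2}. Then for every real s ≥ 4, with θ = arccos(|(v - v*)·ω|/|v - v*|), one has ⟨v'⟩^s + ⟨v*'⟩^s - ⟨v⟩^s - ⟨v*⟩^s ≤ 2^{s+1}(⟨v⟩^{s-1}⟨v*⟩ + ⟨v⟩⟨v*⟩^{s-1}) - 2·cos²θ·sin²θ·⟨v⟩^s. -/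
open Real

set_option maxHeartbeats 1000000


lemma pov_base (x y : ℝ) (hx : 0 ≤ x) (hy : 0 ≤ y) :
    x*y*(1+x+y)^2 ≤ (x+y)^2*((1+x)*(1+y)) := by
  nlinarith [sq_nonneg (x - y), mul_nonneg (mul_nonneg hx hy) (add_nonneg hx hy),
    mul_nonneg (add_nonneg hx hy) (sq_nonneg (x - y)),
    mul_nonneg (mul_nonneg hx hy) (mul_nonneg hx hy), sq_nonneg (x + y)]

lemma pov_prodbnd (x z E : ℝ) (h1 : -E ≤ x) (h2 : x ≤ E) (h3 : -E ≤ z) (h4 : z ≤ E) :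
    x*z ≤ E^2 := by
  nlinarith [mul_nonneg (by linarith : (0:ℝ) ≤ E - x) (by linarith : (0:ℝ) ≤ E + z),
    mul_nonneg (by linarith : (0:ℝ) ≤ E + x) (by linarith : (0:ℝ) ≤ E - z)]

lemma pov_abs_of_sq (u ρ : ℝ) (hρ0 : 0 ≤ ρ) (h : u^2 ≤ ρ^2) : -ρ ≤ u ∧ u ≤ ρ := by
  have h2 := Real.sqrt_le_sqrt h
  rw [Real.sqrt_sq_eq_abs, Real.sqrt_sq hρ0] at h2
  exact abs_le.mp h2

lemma pov_sqrt_facts (a b ρ : ℝ) (ha0 : 0 ≤ a) (hb0 : 0 ≤ b) (hρ0 : 0 ≤ ρ)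
    (hρ2 : ρ^2 = a*b) (hab : 1024*b ≤ a) : 32*ρ ≤ a ∧ 32*b ≤ ρ := by
  constructor
  · nlinarith [mul_le_mul_of_nonneg_left hab ha0, sq_nonneg (a - 32*ρ)]
  · nlinarith [mul_le_mul_of_nonneg_left hab hb0, sq_nonneg (ρ - 32*b)]

lemma pov_ag_sq (α γ y w : ℝ) (hy : 0 ≤ y) (hw : 0 ≤ w) :
    (α*γ)^2 ≤ (1+α^2+y)*(1+γ^2+w) := by
  nlinarith [sq_nonneg α, sq_nonneg γ, mul_nonneg hy hw,
    mul_nonneg (sq_nonneg α) hw, mul_nonneg hy (sq_nonneg γ), hy, hw,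
    mul_nonneg (sq_nonneg α) (sq_nonneg γ)]

lemma pov_r_sq (α γ y w r : ℝ) (hy : 0 ≤ y) (hw : 0 ≤ w) (hr : r^2 ≤ y*w) :
    r^2 ≤ (1+α^2+y)*(1+γ^2+w) := by
  nlinarith [sq_nonneg α, sq_nonneg γ, mul_nonneg hy hw,
    mul_nonneg (sq_nonneg α) hw, mul_nonneg hy (sq_nonneg γ), hy, hw,
    mul_nonneg (sq_nonneg α) (sq_nonneg γ)]

lemma pov_Bnn (y w r : ℝ) (hy : 0 ≤ y) (hw : 0 ≤ w) (hr : r^2 ≤ y*w) :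
    0 ≤ y + w - 2*r := by
  rcases le_or_gt r 0 with h | h
  · linarith
  · nlinarith [sq_nonneg (y - w)]

lemma pov_xy2 (x y : ℝ) (hx : 0 ≤ x) (hy : 0 ≤ y) (h : (1024:ℝ) ≤ 1+x+y) :
    (1+x)*(1+y) ≤ (51/200)*(1+x+y)^2 := by
  have hσ : (1023:ℝ) ≤ x+y := by linarith
  nlinarith [sq_nonneg (x - y), mul_le_mul_of_nonneg_right hσ (by linarith : (0:ℝ) ≤ x+y),
    mul_nonneg hx hy]

lemma pov_mono (α γ y w : ℝ) (hy : 0 ≤ y) (hw : 0 ≤ w) :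
    (1+α^2)*(1+y) ≤ (1+y+γ^2)*(1+α^2+w) := by
  nlinarith [sq_nonneg γ, hw, hy, sq_nonneg α, mul_nonneg (sq_nonneg γ) hw,
    mul_nonneg (sq_nonneg γ) (sq_nonneg α), mul_nonneg hy hw, mul_nonneg (sq_nonneg γ) hy,
    mul_nonneg (sq_nonneg α) hw]

lemma pov_GLcore (α γ y w r a b ρ A B U : ℝ)
    (hy : 0 ≤ y) (hw : 0 ≤ w) (hr : r^2 ≤ y*w)
    (ha : a = 1+α^2+y) (hb : b = 1+γ^2+w)
    (hA : A = (α-γ)^2) (hB : B = y+w-2*r) (hU : U = A + B)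
    (hρ0 : 0 ≤ ρ) (hρ2 : ρ^2 = a*b) (hab : 1024*b ≤ a) :
    (87/100)*a ≤ U ∧ A*B*a^2 ≤ U^2*((1+y+γ^2)*(1+α^2+w)) + 14*(U^2*(a*ρ)) := by
  have hb1 : (1:ℝ) ≤ b := by rw [hb]; linarith [sq_nonneg γ]
  have ha1 : (1024:ℝ) ≤ a := by linarith
  have ha0 : (0:ℝ) ≤ a := by linarith
  have hb0 : (0:ℝ) ≤ b := by linarith
  obtain ⟨hρa, hbρ⟩ := pov_sqrt_facts a b ρ ha0 hb0 hρ0 hρ2 hab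
  have hagsq : (α*γ)^2 ≤ ρ^2 := by rw [hρ2, ha, hb]; exact pov_ag_sq α γ y w hy hw
  obtain ⟨hαγ2, hαγ1⟩ := pov_abs_of_sq (α*γ) ρ hρ0 hagsq
  have hrsq : r^2 ≤ ρ^2 := by rw [hρ2, ha, hb]; exact pov_r_sq α γ y w r hy hw hr
  obtain ⟨hr2, hr1⟩ := pov_abs_of_sq r ρ hρ0 hrsq
  obtain ⟨dA, hdA⟩ : ∃ d : ℝ, d = γ^2 - 2*(α*γ) := ⟨_, rfl⟩
  obtain ⟨dB, hdB⟩ : ∃ d : ℝ, d = w - 2*r := ⟨_, rfl⟩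
  have hAd : A = α^2 + dA := by rw [hA, hdA]; ring
  have hBd : B = y + dB := by rw [hB, hdB]; ring
  have hγb : γ^2 ≤ b - 1 := by rw [hb]; linarith
  have hwb : w ≤ b - 1 := by rw [hb]; linarith [sq_nonneg γ]
  have hdA_ub : dA ≤ (65/32)*ρ := by rw [hdA]; linarith
  have hdA_lb : -((65/32)*ρ) ≤ dA := by rw [hdA]; linarith [sq_nonneg γ]
  have hdB_ub : dB ≤ (65/32)*ρ := by rw [hdB]; linarith
  have hdB_lb : -((65/32)*ρ) ≤ dB := by rw [hdB]; linarith
  have hUeq : U = (a-1) + dA + dB := by rw [hU, hAd, hBd, ha]; ring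
  have hU_low : (87/100)*a ≤ U := by
    have h4ρ : (65/16)*ρ ≤ (65/512)*a := by linarith
    have h1a : (1:ℝ) ≤ a/1024 := by linarith
    linarith
  have hU_hi : U ≤ (113/100)*a := by
    have : (65/16)*ρ ≤ (65/512)*a := by linarith
    linarith
  have hU0 : (0:ℝ) < U := by linarith
  have hB0 : (0:ℝ) ≤ B := by rw [hB]; exact pov_Bnn y w r hy hw hr
  have hA0 : (0:ℝ) ≤ A := by rw [hA]; positivity
  have haρ0 : (0:ℝ) ≤ a*ρ := mul_nonneg ha0 hρ0
  refine ⟨hU_low, ?_⟩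
  have hdAdB : dA*dB ≤ ((65/32)*ρ)^2 :=
    pov_prodbnd dA dB ((65/32)*ρ) hdA_lb hdA_ub hdB_lb hdB_ub
  have hρ2aρ : 32*ρ^2 ≤ a*ρ := by
    have h := mul_le_mul_of_nonneg_right hρa hρ0
    rw [pow_two]; linarith
  have hABub : A*B ≤ α^2*y + (22/10)*(a*ρ) := by
    have hexp : A*B = α^2*y + α^2*dB + y*dA + dA*dB := by rw [hAd, hBd]; ring
    have h1 : α^2*dB ≤ α^2*((65/32)*ρ) := mul_le_mul_of_nonneg_left hdB_ub (sq_nonneg α)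
    have h2 : y*dA ≤ y*((65/32)*ρ) := mul_le_mul_of_nonneg_left hdA_ub hy
    have h3 : α^2 + y ≤ a := by rw [ha]; linarith
    have h5 := mul_le_mul_of_nonneg_right h3 (by positivity : (0:ℝ) ≤ (65/32)*ρ)
    -- dA*dB ≤ (4225/1024)ρ² and 32ρ² ≤ aρ
    have h4 : dA*dB ≤ (4225/32768)*(a*ρ) := by linarith [hdAdB, hρ2aρ]
    linarith [hexp, h1, h2, h4, h5]
  have hbase : α^2*y*a^2 ≤ (a-1)^2*((1+α^2)*(1+y)) := by
    have h := pov_base (α^2) y (sq_nonneg α) hy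
    rw [ha]
    have e2 : (1+α^2+y-1)^2 = (α^2+y)^2 := by ring
    rw [e2]
    linarith [h]
  have hUρ : U*ρ ≤ (113/100)*(a*ρ) := by
    have h := mul_le_mul_of_nonneg_right hU_hi hρ0
    linarith [h]
  have hσsq : (a-1)^2 ≤ U^2 + (98/10)*(a*ρ) := by
    have h1 : a - 1 ≤ U + (65/16)*ρ := by linarith [hUeq]
    have h0 : (0:ℝ) ≤ a - 1 := by linarith
    have h2 : (a-1)^2 ≤ (U + (65/16)*ρ)^2 := by
      apply pow_le_pow_left₀ h0 h1
    -- (U + 65/16 ρ)² = U² + (65/8)Uρ + (65/16)²ρ² ≤ U² + (65/8)(113/100)aρ + (4225/256)(1/32)aρ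
    linarith [h2, hUρ, hρ2aρ]
  have hxy2 : (1+α^2)*(1+y) ≤ (51/200)*a^2 := by
    rw [ha]
    exact pov_xy2 (α^2) y (sq_nonneg α) hy (by rw [ha] at ha1; exact ha1)
  have ha2U : a^2 ≤ (133/100)*U^2 := by
    have h := mul_le_mul hU_low hU_low (by positivity) hU0.le
    linarith [h, sq_nonneg U]
  have hxyp : (0:ℝ) ≤ (1+α^2)*(1+y) := by positivity
  have step1 : A*B*a^2 ≤ (α^2*y)*a^2 + ((22/10)*(a*ρ))*a^2 := by
    have h := mul_le_mul_of_nonneg_right hABub (sq_nonneg a)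
    linarith [h]
  have step3 : (a-1)^2*((1+α^2)*(1+y)) ≤ U^2*((1+α^2)*(1+y)) + ((98/10)*(a*ρ))*((1+α^2)*(1+y)) := by
    have h := mul_le_mul_of_nonneg_right hσsq hxyp
    linarith [h]
  have step4 : ((98/10)*(a*ρ))*((1+α^2)*(1+y)) ≤ ((98/10)*(a*ρ))*((51/200)*a^2) := by
    exact mul_le_mul_of_nonneg_left hxy2 (by positivity)
  have step5 : ((22/10)*(a*ρ))*a^2 + ((98/10)*(a*ρ))*((51/200)*a^2) ≤ (14:ℝ)*(U^2*(a*ρ)) := by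
    have h6 : (a*ρ)*a^2 ≤ (a*ρ)*((133/100)*U^2) := mul_le_mul_of_nonneg_left ha2U haρ0
    have h7 : (0:ℝ) ≤ U^2*(a*ρ) := mul_nonneg (sq_nonneg U) haρ0
    linarith [h6, h7]
  have step6 : U^2*((1+α^2)*(1+y)) ≤ U^2*((1+y+γ^2)*(1+α^2+w)) :=
    mul_le_mul_of_nonneg_left (pov_mono α γ y w hy hw) (sq_nonneg U)
  calc A*B*a^2 ≤ (α^2*y)*a^2 + ((22/10)*(a*ρ))*a^2 := step1
    _ ≤ (a-1)^2*((1+α^2)*(1+y)) + ((22/10)*(a*ρ))*a^2 := by linarith [hbase]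
    _ ≤ U^2*((1+α^2)*(1+y)) + ((98/10)*(a*ρ))*((1+α^2)*(1+y)) + ((22/10)*(a*ρ))*a^2 := by
        linarith [step3]
    _ ≤ U^2*((1+α^2)*(1+y)) + ((98/10)*(a*ρ))*((51/200)*a^2) + ((22/10)*(a*ρ))*a^2 := by
        linarith [step4]
    _ ≤ U^2*((1+α^2)*(1+y)) + 14*(U^2*(a*ρ)) := by linarith [step5]
    _ ≤ U^2*((1+y+γ^2)*(1+α^2+w)) + 14*(U^2*(a*ρ)) := by linarith [step6]



lemma pov_chord (M m p : ℝ) (hM : 1 ≤ M) (hm : 0 ≤ m) (hmM : m ≤ M) (hp : 1 ≤ p) :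
    (M + m) ^ p ≤ M ^ p + (2 ^ p - 1) * (M ^ (p - 1) * m) := by
  have hM0 : (0:ℝ) < M := by linarith
  have ht0 : 0 ≤ m / M := div_nonneg hm hM0.le
  have ht1 : m / M ≤ 1 := (div_le_one hM0).2 hmM
  have hkey := (convexOn_rpow hp).2 (Set.mem_Ici.2 (by linarith : (0:ℝ) ≤ M))
      (Set.mem_Ici.2 (by linarith : (0:ℝ) ≤ 2 * M)) (by linarith : (0:ℝ) ≤ 1 - m / M) ht0
      (by ring)
  have harg : (1 - m / M) • M + (m / M) • (2 * M) = M + m := by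
    simp only [smul_eq_mul]
    field_simp
    ring
  rw [harg] at hkey
  have h2M : (2 * M) ^ p = 2 ^ p * M ^ p := by
    rw [mul_rpow (by norm_num) hM0.le]
  have hMp1 : M ^ (p - 1) * M = M ^ p := by
    rw [← Real.rpow_add_one hM0.ne' (p-1)]; ring_nf
  have hmMp : (m / M) * M ^ p = M ^ (p - 1) * m := by
    rw [← hMp1]; field_simp
  calc (M + m) ^ p ≤ (1 - m / M) * M ^ p + (m / M) * ((2*M) ^ p) := by
        simpa using hkey
    _ = M ^ p + (2 ^ p - 1) * ((m / M) * M ^ p) := by rw [h2M]; ring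
    _ = M ^ p + (2 ^ p - 1) * (M ^ (p - 1) * m) := by rw [hmMp]

lemma pov_drop (α β p : ℝ) (hα : 1 ≤ α) (hβ : 1 ≤ β) (hp : 2 ≤ p) :
    α ^ p + β ^ p ≤ (α + β) ^ p - 2 * α * β * (α + β) ^ (p - 2) := by
  have hα0 : (0:ℝ) < α := by linarith
  have hβ0 : (0:ℝ) < β := by linarith
  have hS0 : (0:ℝ) < α + β := by linarith
  have h1 : α ^ p = α ^ (2:ℝ) * α ^ (p - 2) := by
    rw [← Real.rpow_add hα0]; ring_nf
  have h2 : β ^ p = β ^ (2:ℝ) * β ^ (p - 2) := by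
    rw [← Real.rpow_add hβ0]; ring_nf
  have h3 : α ^ (p-2) ≤ (α + β) ^ (p-2) :=
    Real.rpow_le_rpow hα0.le (by linarith) (by linarith)
  have h4 : β ^ (p-2) ≤ (α + β) ^ (p-2) :=
    Real.rpow_le_rpow hβ0.le (by linarith) (by linarith)
  have h5 : (α+β) ^ p = (α+β) ^ (2:ℝ) * (α+β) ^ (p - 2) := by
    rw [← Real.rpow_add hS0]; ring_nf
  have e2a : α ^ (2:ℝ) = α ^ (2:ℕ) := by
    rw [← Real.rpow_natCast α 2]; norm_num
  have e2b : β ^ (2:ℝ) = β ^ (2:ℕ) := by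
    rw [← Real.rpow_natCast β 2]; norm_num
  have e2S : (α+β) ^ (2:ℝ) = (α+β) ^ (2:ℕ) := by
    rw [← Real.rpow_natCast (α+β) 2]; norm_num
  have hpos : (0:ℝ) ≤ (α+β) ^ (p-2) := (Real.rpow_pos_of_pos hS0 _).le
  calc α ^ p + β ^ p = α ^ (2:ℕ) * α ^ (p-2) + β ^ (2:ℕ) * β ^ (p-2) := by
        rw [h1, h2, e2a, e2b]
    _ ≤ α ^ (2:ℕ) * (α+β) ^ (p-2) + β ^ (2:ℕ) * (α+β) ^ (p-2) := by gcongr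
    _ = ((α+β)^(2:ℕ) - 2*α*β) * (α+β) ^ (p-2) := by ring
    _ = (α + β) ^ p - 2 * α * β * (α + β) ^ (p - 2) := by
        rw [h5, e2S]; ring

lemma pov_q_ineq (q X : ℝ) (hq : 4 ≤ q) (hX : 0 ≤ X) (k : ℝ) (hk : k ≤ 28) (hk0 : 0 ≤ k) :
    (q - 1 + k) * X ≤ 2*q^2*X := by
  have h1 : (0:ℝ) ≤ (q - 4)*(2*q + 7) := by nlinarith
  have h2 : q - 1 + k ≤ 2*q^2 := by nlinarith
  nlinarith [mul_le_mul_of_nonneg_right h2 hX]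

lemma pov_master (a b a' b' c p : ℝ) (ha : 1 ≤ a) (hb : 1 ≤ b) (ha' : 1 ≤ a') (hb' : 1 ≤ b')
    (hS : a' + b' = a + b) (hp : 2 ≤ p) (hc0 : 0 ≤ c) (hc : c ≤ 1/4)
    (hGL : 1024*b ≤ a → c*a^(2:ℕ) ≤ a'*b' + 14*(a*Real.sqrt (a*b))) :
    a'^p + b'^p - a^p - b^p ≤
      2*4^p*(a^(p-1/2)*b^((1:ℝ)/2) + a^((1:ℝ)/2)*b^(p-1/2)) - 2*c*a^p := by
  have ha0 : (0:ℝ) < a := by linarith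
  have hb0 : (0:ℝ) < b := by linarith
  have hS0 : (0:ℝ) < a + b := by linarith
  set X : ℝ := a^(p-1/2)*b^((1:ℝ)/2) with hX_def
  set Y : ℝ := a^((1:ℝ)/2)*b^(p-1/2) with hY_def
  have hX0 : 0 ≤ X := mul_nonneg (Real.rpow_nonneg ha0.le _) (Real.rpow_nonneg hb0.le _)
  have hY0 : 0 ≤ Y := mul_nonneg (Real.rpow_nonneg ha0.le _) (Real.rpow_nonneg hb0.le _)
  set q : ℝ := 2^p with hq_def
  have hq4 : (4:ℝ) ≤ q := by
    rw [hq_def]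
    calc (4:ℝ) = 2^(2:ℝ) := by
          rw [show (2:ℝ) = ((2:ℕ):ℝ) by norm_num, Real.rpow_natCast]; norm_num
      _ ≤ 2^p := Real.rpow_le_rpow_of_exponent_le (by norm_num) hp
  have h4p : (4:ℝ)^p = q^2 := by
    rw [hq_def, ← Real.rpow_natCast ((2:ℝ)^p) 2, ← Real.rpow_mul (by norm_num : (0:ℝ) ≤ 2)]
    rw [show (4:ℝ) = 2^(2:ℝ) by
      rw [show (2:ℝ) = ((2:ℕ):ℝ) by norm_num, Real.rpow_natCast]; norm_num]
    rw [← Real.rpow_mul (by norm_num : (0:ℝ) ≤ 2)]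
    norm_num [mul_comm]
  have hap0 : (0:ℝ) ≤ a^p := Real.rpow_nonneg ha0.le _
  have hbp0 : (0:ℝ) ≤ b^p := Real.rpow_nonneg hb0.le _
  rcases le_total b a with hba | hab
  · -- case b ≤ a
    have hchord := pov_chord a b p ha hb0.le hba (by linarith)
    have hcross1 : a^(p-1)*b ≤ X := by
      rw [hX_def]
      have e1 : b = b^((1:ℝ)/2) * b^((1:ℝ)/2) := by
        rw [← Real.rpow_add hb0]; norm_num
      have e2 : b^((1:ℝ)/2) ≤ a^((1:ℝ)/2) := Real.rpow_le_rpow hb0.le hba (by norm_num)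
      have e3 : a^(p-1) * a^((1:ℝ)/2) = a^(p-1/2) := by
        rw [show p - 1/2 = (p-1) + 1/2 by ring, Real.rpow_add ha0]
      calc a^(p-1)*b = a^(p-1) * (b^((1:ℝ)/2) * b^((1:ℝ)/2)) := by rw [← e1]
        _ ≤ a^(p-1) * (a^((1:ℝ)/2) * b^((1:ℝ)/2)) := by
            have hb12 : (0:ℝ) ≤ b^((1:ℝ)/2) := Real.rpow_nonneg hb0.le _
            have ha12 : (0:ℝ) ≤ a^(p-1) := Real.rpow_nonneg ha0.le _
            gcongr
        _ = a^(p-1/2) * b^((1:ℝ)/2) := by rw [← e3]; ring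
    rcases le_total a (1024*b) with hA | hB
    · -- subcase a ≤ 1024 b : crude bound on c-term
      have hdropS : a'^p + b'^p ≤ (a+b)^p := by
        have h := pov_drop a' b' p ha' hb' hp
        rw [hS] at h
        have hnn : (0:ℝ) ≤ 2*a'*b'*(a+b)^(p-2) := by
          have := Real.rpow_nonneg hS0.le (p-2)
          positivity
        linarith
      have hca : 2*c*a^p ≤ 16*X := by
        have e3 : a^(p-1/2) * a^((1:ℝ)/2) = a^p := by
          rw [show p = (p-1/2) + 1/2 by ring, Real.rpow_add ha0]
          rw [show p - 1/2 + 1/2 - 1/2 = p - 1/2 by ring]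
        have e4 : a^((1:ℝ)/2) ≤ 32*b^((1:ℝ)/2) := by
          calc a^((1:ℝ)/2) ≤ (1024*b)^((1:ℝ)/2) := Real.rpow_le_rpow ha0.le hA (by norm_num)
            _ = 1024^((1:ℝ)/2) * b^((1:ℝ)/2) := Real.mul_rpow (by norm_num) hb0.le
            _ = 32*b^((1:ℝ)/2) := by
                norm_num
        have h5 : a^p ≤ 32*X := by
          rw [hX_def, ← e3]
          have h12 : (0:ℝ) ≤ a^(p-1/2) := Real.rpow_nonneg ha0.le _
          calc a^(p-1/2) * a^((1:ℝ)/2) ≤ a^(p-1/2) * (32*b^((1:ℝ)/2)) := by gcongr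
            _ = 32*(a^(p-1/2)*b^((1:ℝ)/2)) := by ring
        have h6 := mul_le_mul_of_nonneg_right hc hap0
        linarith [h5, h6]
      have hfin := pov_q_ineq q X hq4 hX0 17 (by norm_num) (by norm_num)
      have hq0 : (0:ℝ) ≤ 2^p - 1 := by rw [← hq_def]; linarith
      have hZX := mul_le_mul_of_nonneg_left hcross1 hq0
      have hqY : (0:ℝ) ≤ 2*(2^p)^2*Y := by positivity
      rw [h4p]
      rw [hq_def] at hfin ⊢
      linarith [hchord, hdropS, hca, hZX, hfin, hbp0, hqY]
    · -- subcase 1024 b ≤ a : use geometric lemma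
      have hGLr := hGL hB
      have hdrop := pov_drop a' b' p ha' hb' hp
      rw [hS] at hdrop
      have hsplit : a^p = a^(2:ℕ) * a^(p-2) := by
        rw [← Real.rpow_natCast a 2, ← Real.rpow_add ha0]; norm_num
      have hpm2 : (0:ℝ) ≤ a^(p-2) := Real.rpow_nonneg ha0.le _
      have hmonoS : a^(p-2) ≤ (a+b)^(p-2) :=
        Real.rpow_le_rpow ha0.le (by linarith) (by linarith)
      have hsqrtX : a*Real.sqrt (a*b)*a^(p-2) = X := by
        rw [hX_def, Real.sqrt_mul ha0.le, Real.sqrt_eq_rpow, Real.sqrt_eq_rpow]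
        rw [show p - 1/2 = 1 + 1/2 + (p-2) by ring]
        rw [Real.rpow_add ha0, Real.rpow_add ha0, Real.rpow_one]
        ring
      have hca : 2*c*a^p ≤ 2*(a'*b')*a^(p-2) + 28*X := by
        calc 2*c*a^p = 2*(c*a^(2:ℕ))*a^(p-2) := by rw [hsplit]; ring
          _ ≤ 2*(a'*b' + 14*(a*Real.sqrt (a*b)))*a^(p-2) := by
              have h := mul_le_mul_of_nonneg_right hGLr hpm2
              linarith [h]
          _ = 2*(a'*b')*a^(p-2) + 28*(a*Real.sqrt (a*b)*a^(p-2)) := by ring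
          _ = 2*(a'*b')*a^(p-2) + 28*X := by rw [hsqrtX]
      have hdropcmp : 2*(a'*b')*a^(p-2) ≤ 2*a'*b'*(a+b)^(p-2) := by
        have h0 : (0:ℝ) ≤ 2*(a'*b') := by
          have := mul_pos (show (0:ℝ) < a' by linarith) (show (0:ℝ) < b' by linarith)
          linarith
        have h := mul_le_mul_of_nonneg_left hmonoS h0
        linarith [h]
      have hq0 : (0:ℝ) ≤ 2^p - 1 := by rw [← hq_def]; linarith
      have hZX := mul_le_mul_of_nonneg_left hcross1 hq0
      have hqY : (0:ℝ) ≤ 2*(2^p)^2*Y := by positivity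
      have hfin := pov_q_ineq q X hq4 hX0 28 (by norm_num) (by norm_num)
      rw [h4p]
      rw [hq_def] at hfin ⊢
      linarith [hchord, hdrop, hca, hZX, hfin, hbp0, hqY, hdropcmp]
  · -- case a ≤ b
    have hchord := pov_chord b a p hb ha0.le hab (by linarith)
    have hcross2 : b^(p-1)*a ≤ Y := by
      rw [hY_def]
      have e1 : a = a^((1:ℝ)/2) * a^((1:ℝ)/2) := by
        rw [← Real.rpow_add ha0]; norm_num
      have e2 : a^((1:ℝ)/2) ≤ b^((1:ℝ)/2) := Real.rpow_le_rpow ha0.le hab (by norm_num)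
      have e3 : b^(p-1) * b^((1:ℝ)/2) = b^(p-1/2) := by
        rw [show p - 1/2 = (p-1) + 1/2 by ring, Real.rpow_add hb0]
      calc b^(p-1)*a = b^(p-1) * (a^((1:ℝ)/2) * a^((1:ℝ)/2)) := by rw [← e1]
        _ ≤ b^(p-1) * (b^((1:ℝ)/2) * a^((1:ℝ)/2)) := by
            have h1 : (0:ℝ) ≤ a^((1:ℝ)/2) := Real.rpow_nonneg ha0.le _
            have h2 : (0:ℝ) ≤ b^(p-1) := Real.rpow_nonneg hb0.le _
            gcongr
        _ = a^((1:ℝ)/2) * b^(p-1/2) := by rw [← e3]; ring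
    have hdropS : a'^p + b'^p ≤ (a+b)^p := by
      have h := pov_drop a' b' p ha' hb' hp
      rw [hS] at h
      have hnn : (0:ℝ) ≤ 2*a'*b'*(a+b)^(p-2) := by
        have := Real.rpow_nonneg hS0.le (p-2)
        positivity
      linarith
    have hca : 2*c*a^p ≤ Y := by
      have e3 : a^((1:ℝ)/2) * a^(p-1/2) = a^p := by
        rw [show p = 1/2 + (p-1/2) by ring, Real.rpow_add ha0]
        rw [show 1/2 + (p-1/2) - 1/2 = p - 1/2 by ring]
      have e4 : a^(p-1/2) ≤ b^(p-1/2) := Real.rpow_le_rpow ha0.le hab (by linarith)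
      have h5 : a^p ≤ Y := by
        rw [hY_def, ← e3]
        have h1 : (0:ℝ) ≤ a^((1:ℝ)/2) := Real.rpow_nonneg ha0.le _
        gcongr
      have h6 := mul_le_mul_of_nonneg_right hc hap0
      linarith [h5, h6]
    have hq0 : (0:ℝ) ≤ 2^p - 1 := by rw [← hq_def]; linarith
    have hZY := mul_le_mul_of_nonneg_left hcross2 hq0
    have hqX : (0:ℝ) ≤ 2*(2^p)^2*X := by positivity
    have hfin := pov_q_ineq q Y hq4 hY0 1 (by norm_num) (by norm_num)
    rw [h4p]
    rw [hq_def] at hfin ⊢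
    have hcomm : (b+a)^p = (a+b)^p := by rw [add_comm]
    rw [hcomm] at hchord
    linarith [hchord, hdropS, hca, hZY, hfin, hap0, hqX]

lemma pov_sqrt_rpow (z e : ℝ) (hz : 0 ≤ z) : (Real.sqrt z)^e = z^(e/2) := by
  rw [Real.sqrt_eq_rpow, ← Real.rpow_mul hz]
  congr 1
  ring

theorem stmt_14 (v vs ω : EuclideanSpace ℝ (Fin 3)) (hω : ‖ω‖ = 1) (s : ℝ) (hs : 4 ≤ s) :
    (Real.sqrt (1 + ‖v - (inner ℝ (v - vs) ω : ℝ) • ω‖ ^ 2)) ^ s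
      + (Real.sqrt (1 + ‖vs + (inner ℝ (v - vs) ω : ℝ) • ω‖ ^ 2)) ^ s
      - (Real.sqrt (1 + ‖v‖ ^ 2)) ^ s - (Real.sqrt (1 + ‖vs‖ ^ 2)) ^ s
    ≤ (2:ℝ) ^ (s + 1) *
        ((Real.sqrt (1 + ‖v‖ ^ 2)) ^ (s - 1) * Real.sqrt (1 + ‖vs‖ ^ 2)
          + Real.sqrt (1 + ‖v‖ ^ 2) * (Real.sqrt (1 + ‖vs‖ ^ 2)) ^ (s - 1))
      - 2 * (Real.cos (Real.arccos (|(inner ℝ (v - vs) ω : ℝ)| / ‖v - vs‖))) ^ 2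
          * (Real.sin (Real.arccos (|(inner ℝ (v - vs) ω : ℝ)| / ‖v - vs‖))) ^ 2
          * (Real.sqrt (1 + ‖v‖ ^ 2)) ^ s := by
  set k : ℝ := (inner ℝ (v - vs) ω : ℝ) with hk_def
  set α : ℝ := (inner ℝ v ω : ℝ) with hα_def
  set γ : ℝ := (inner ℝ vs ω : ℝ) with hγ_def
  set N : ℝ := ‖v - vs‖ with hN_def
  set t : ℝ := |k| / N with ht_def
  have hN0 : 0 ≤ N := norm_nonneg _
  have hkN : |k| ≤ N := by
    have h := abs_real_inner_le_norm (v - vs) ω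
    rwa [hω, mul_one] at h
  have ht0 : 0 ≤ t := div_nonneg (abs_nonneg _) hN0
  have ht1 : t ≤ 1 := div_le_one_of_le₀ hkN hN0
  have ht2nn : (0:ℝ) ≤ 1 - t^2 := by nlinarith
  -- rewrite trig
  rw [Real.cos_arccos (by linarith) ht1, Real.sin_arccos, Real.sq_sqrt ht2nn]
  set c : ℝ := t^2 * (1 - t^2) with hc_def
  have hc0 : 0 ≤ c := mul_nonneg (sq_nonneg _) ht2nn
  have hc14 : c ≤ 1/4 := by nlinarith [sq_nonneg (t^2 - 1/2)]
  -- scalar quantities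
  set a : ℝ := 1 + ‖v‖^2 with ha_def
  set b : ℝ := 1 + ‖vs‖^2 with hb_def
  set a' : ℝ := 1 + ‖v - k • ω‖^2 with ha'_def
  set b' : ℝ := 1 + ‖vs + k • ω‖^2 with hb'_def
  have ha1 : 1 ≤ a := by rw [ha_def]; linarith [sq_nonneg ‖v‖]
  have hb1 : 1 ≤ b := by rw [hb_def]; linarith [sq_nonneg ‖vs‖]
  have ha'1 : 1 ≤ a' := by rw [ha'_def]; linarith [sq_nonneg ‖v - k • ω‖]
  have hb'1 : 1 ≤ b' := by rw [hb'_def]; linarith [sq_nonneg ‖vs + k • ω‖]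
  -- norm computations
  have hkω : ‖k • ω‖^2 = k^2 := by
    rw [norm_smul, hω, Real.norm_eq_abs, mul_one, sq_abs]
  have hkαγ : k = α - γ := by rw [hk_def, hα_def, hγ_def, inner_sub_left]
  have hv'2 : ‖v - k • ω‖^2 = ‖v‖^2 - 2*(k*α) + k^2 := by
    rw [norm_sub_sq_real, real_inner_smul_right, hkω, ← hα_def]
  have hvs'2 : ‖vs + k • ω‖^2 = ‖vs‖^2 + 2*(k*γ) + k^2 := by
    rw [norm_add_sq_real, real_inner_smul_right, hkω, ← hγ_def]
  set y : ℝ := ‖v - α • ω‖^2 with hy_def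
  set w : ℝ := ‖vs - γ • ω‖^2 with hw_def
  set r : ℝ := (inner ℝ (v - α • ω) (vs - γ • ω) : ℝ) with hr_def
  have hy0 : 0 ≤ y := by rw [hy_def]; positivity
  have hw0 : 0 ≤ w := by rw [hw_def]; positivity
  have hyw : r^2 ≤ y*w := by
    have h := real_inner_mul_inner_self_le (v - α • ω) (vs - γ • ω)
    rw [real_inner_self_eq_norm_sq, real_inner_self_eq_norm_sq] at h
    rw [hr_def, hy_def, hw_def, sq]
    exact h
  have hy_eq : y = ‖v‖^2 - α^2 := by
    rw [hy_def, norm_sub_sq_real, real_inner_smul_right, norm_smul, hω, Real.norm_eq_abs,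
      mul_one, sq_abs, ← hα_def]
    ring
  have hw_eq : w = ‖vs‖^2 - γ^2 := by
    rw [hw_def, norm_sub_sq_real, real_inner_smul_right, norm_smul, hω, Real.norm_eq_abs,
      mul_one, sq_abs, ← hγ_def]
    ring
  have hr_eq : r = (inner ℝ v vs : ℝ) - α*γ := by
    have e1 : (inner ℝ (v - α • ω) (vs - γ • ω) : ℝ)
        = (inner ℝ v vs : ℝ) - γ*(inner ℝ v ω : ℝ) - α*(inner ℝ ω vs : ℝ)
          + α*γ*(inner ℝ ω ω : ℝ) := by
      simp only [inner_sub_left, inner_sub_right, real_inner_smul_left, real_inner_smul_right]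
      ring
    rw [hr_def, e1, real_inner_comm vs ω, real_inner_self_eq_norm_sq, hω, one_pow,
      ← hα_def, ← hγ_def]
    ring
  have hNsq : N^2 = ‖v‖^2 - 2*(inner ℝ v vs : ℝ) + ‖vs‖^2 := by
    rw [hN_def, norm_sub_sq_real]
  have ha_eq : a = 1 + α^2 + y := by rw [ha_def, hy_eq]; ring
  have hb_eq : b = 1 + γ^2 + w := by rw [hb_def, hw_eq]; ring
  have ha'_eq : a' = 1 + y + γ^2 := by
    rw [ha'_def, hv'2, hy_eq, hkαγ]; ring
  have hb'_eq : b' = 1 + α^2 + w := by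
    rw [hb'_def, hvs'2, hw_eq, hkαγ]; ring
  have hS : a' + b' = a + b := by
    rw [ha'_eq, hb'_eq, ha_eq, hb_eq]; ring
  have hUnorm : k^2 + (y + w - 2*r) = N^2 := by
    rw [hy_eq, hw_eq, hr_eq, hkαγ, hNsq]; ring
  -- the geometric hypothesis
  have hGL : 1024*b ≤ a → c*a^(2:ℕ) ≤ a'*b' + 14*(a*Real.sqrt (a*b)) := by
    intro hB1024
    have hab0 : (0:ℝ) ≤ a*b := by positivity
    obtain ⟨hUlow, hmain⟩ := pov_GLcore α γ y w r a b (Real.sqrt (a*b))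
      (k^2) (y+w-2*r) (k^2 + (y+w-2*r)) hy0 hw0 hyw ha_eq hb_eq
      (by rw [hkαγ]) rfl rfl (Real.sqrt_nonneg _) (Real.sq_sqrt hab0) hB1024
    rw [hUnorm] at hUlow hmain
    have hN2pos : (0:ℝ) < N^2 := by linarith
    have hNne : N ≠ 0 := by
      intro h
      rw [h] at hN2pos
      simp at hN2pos
    have ht2 : t^2 = k^2/N^2 := by rw [ht_def, div_pow, sq_abs]
    have h1mt : 1 - t^2 = (y + w - 2*r)/N^2 := by
      rw [ht2]
      field_simp
      linarith [hUnorm]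
    have hceq : c*(N^2*N^2) = k^2*(y+w-2*r) := by
      rw [hc_def, h1mt, ht2]
      field_simp
    rw [← mul_le_mul_iff_of_pos_right (by positivity : (0:ℝ) < N^2*N^2)]
    calc c*a^(2:ℕ)*(N^2*N^2) = k^2*(y+w-2*r)*a^2 := by
          rw [show c*a^(2:ℕ)*(N^2*N^2) = c*(N^2*N^2)*a^(2:ℕ) by ring, hceq]
      _ ≤ (N^2)^2*((1+y+γ^2)*(1+α^2+w)) + 14*((N^2)^2*(a*Real.sqrt (a*b))) := hmain
      _ = (a'*b' + 14*(a*Real.sqrt (a*b)))*(N^2*N^2) := by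
          rw [ha'_eq, hb'_eq]; ring
  -- apply master
  have key := pov_master a b a' b' c (s/2) ha1 hb1 ha'1 hb'1 hS (by linarith) hc0 hc14 hGL
  -- convert goal to rpow form
  have hz1 : (0:ℝ) ≤ a' := by linarith
  have hz2 : (0:ℝ) ≤ b' := by linarith
  have hz3 : (0:ℝ) ≤ a := by linarith
  have hz4 : (0:ℝ) ≤ b := by linarith
  rw [pov_sqrt_rpow a' s hz1, pov_sqrt_rpow b' s hz2, pov_sqrt_rpow a s hz3,
    pov_sqrt_rpow b s hz4, pov_sqrt_rpow a (s-1) hz3, pov_sqrt_rpow b (s-1) hz4,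
    Real.sqrt_eq_rpow a, Real.sqrt_eq_rpow b]
  have h2s : (2:ℝ)^(s+1) = 2*4^(s/2) := by
    rw [Real.rpow_add (by norm_num : (0:ℝ) < 2), Real.rpow_one]
    have h4 : (4:ℝ)^(s/2) = 2^s := by
      rw [show (4:ℝ) = 2^(2:ℝ) by
        rw [show (2:ℝ) = ((2:ℕ):ℝ) by norm_num, Real.rpow_natCast]; norm_num]
      rw [← Real.rpow_mul (by norm_num : (0:ℝ) ≤ 2)]
      rw [show 2*(s/2) = s by ring]
    rw [h4]; ring
  rw [h2s, show (s-1)/2 = s/2 - 1/2 by ring]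
  rw [hc_def] at key
  linarith [key]
end
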